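/- Let Γ be a finite additive abelian group of odd order and let S be a multiset of elements of Γ of cardinality 3, with Cayley sum adjacency matrix A_S. Then there exists a multiset L of nonnegative real numbers such that the multiset of eigenvalues of A_S equals {3} + L + (−L). -/

import Mathlib

open Polynomial Matrix

lemma count_mul_sum {G : Type*} [Fintype G] [DecidableEq G]
    (S : Multiset G) (f : G → ℂ) :
    ∑ w : G, (S.count w : ℂ) * f w = (S.map f).sum := by
  induction S using Multiset.induction_on with
  | empty => simp
  | cons s T ih =>
    have h1 : ∀ w : G, (((s ::ₘ T).count w : ℂ)) * f w
        = (T.count w : ℂ) * f w + (if w = s then f w else 0) := by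
      intro w
      rw [Multiset.count_cons]
      push_cast
      rw [add_mul]
      congr 1
      split_ifs <;> simp
    rw [Finset.sum_congr rfl fun w _ => h1 w, Finset.sum_add_distrib, ih,
      Finset.sum_ite_eq' Finset.univ s f, if_pos (Finset.mem_univ s),
      Multiset.map_cons, Multiset.sum_cons, add_comm]

lemma charpoly_involution_matrix {ι : Type*} [Fintype ι] [DecidableEq ι] [LinearOrder ι]
    (σ : ι → ι) (hσ : Function.Involutive σ) (i₀ : ι) (hfix : ∀ i, σ i = i ↔ i = i₀)
    (a : ι → ℂ) :
    (Matrix.of fun i j => if j = σ i then a i else 0 : Matrix ι ι ℂ).charpoly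
      = (X - C (a i₀)) * ∏ k : {i : ι // i < σ i}, ((X : ℂ[X]) ^ 2 - C (a k.1 * a (σ k.1))) := by
  classical
  set M := (Matrix.of fun i j => if j = σ i then a i else 0 : Matrix ι ι ℂ) with hM
  have hσ0 : σ i₀ = i₀ := (hfix i₀).mpr rfl
  set K := {i : ι // i < σ i} with hK
  have hne : ∀ k : K, k.1 ≠ i₀ := by
    intro k h
    have h2 := k.2
    rw [(hfix k.1).mpr h] at h2
    exact lt_irrefl _ h2
  have hσne : ∀ k : K, σ k.1 ≠ i₀ := by
    intro k h
    apply hne k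
    have h2 := congrArg σ h
    rwa [hσ k.1, hσ0] at h2
  have hkσ : ∀ k : K, k.1 ≠ σ k.1 := fun k => ne_of_lt k.2
  have hcross : ∀ k k' : K, k.1 ≠ σ k'.1 := by
    intro k k' h
    have h1 : σ k.1 = k'.1 := by
      have h2 := congrArg σ h; rwa [hσ] at h2
    have h2 : k.1 < k'.1 := by have := k.2; rwa [h1] at this
    have h3 : k'.1 < k.1 := by have := k'.2; rwa [← h] at this
    exact absurd h2 (not_lt.mpr h3.le)
  let φ : Unit ⊕ Fin 2 × K → ι := fun x =>
    match x with
    | Sum.inl _ => i₀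
    | Sum.inr (b, k) => if b = 0 then k.1 else σ k.1
  have hφinl : φ (Sum.inl ()) = i₀ := rfl
  have hφ0 : ∀ k : K, φ (Sum.inr (0, k)) = k.1 := fun k => rfl
  have hφ1 : ∀ k : K, φ (Sum.inr (1, k)) = σ k.1 := fun k => rfl
  have hφinj : Function.Injective φ := by
    rintro (⟨⟩ | ⟨b, k⟩) (⟨⟩ | ⟨b', k'⟩) h
    · rfl
    · exfalso
      fin_cases b' <;> simp only [Fin.zero_eta, Fin.mk_one, φ] at h
      · exact hne k' h.symm
      · exact hσne k' h.symm
    · exfalso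
      fin_cases b <;> simp only [Fin.zero_eta, Fin.mk_one, φ] at h
      · exact hne k h
      · exact hσne k h
    · fin_cases b <;> fin_cases b' <;> (try simp only [Fin.zero_eta, Fin.mk_one] at h ⊢)
      · rw [hφ0, hφ0] at h
        exact congrArg (fun z => Sum.inr ((0 : Fin 2), z)) (Subtype.ext h)
      · exfalso; rw [hφ0, hφ1] at h; exact hcross k k' h
      · exfalso; rw [hφ1, hφ0] at h; exact hcross k' k h.symm
      · rw [hφ1, hφ1] at h
        exact congrArg (fun z => Sum.inr ((1 : Fin 2), z)) (Subtype.ext (hσ.injective h))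
  have hφsurj : Function.Surjective φ := by
    intro i
    by_cases h0 : i = i₀
    · exact ⟨Sum.inl (), h0.symm⟩
    · have hne2 : i ≠ σ i := fun h => h0 ((hfix i).mp h.symm)
      rcases lt_or_gt_of_ne hne2 with h | h
      · exact ⟨Sum.inr (0, ⟨i, h⟩), rfl⟩
      · refine ⟨Sum.inr (1, ⟨σ i, ?_⟩), ?_⟩
        · rw [hσ]; exact h
        · exact hσ i
  let e2 : Unit ⊕ Fin 2 × K ≃ ι := Equiv.ofBijective φ ⟨hφinj, hφsurj⟩
  have he2 : ∀ x, e2 x = φ x := fun x => rfl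
  rw [Matrix.charpoly, ← Matrix.det_submatrix_equiv_self e2 (charmatrix M)]
  have hMd : ∀ i, M i i = if i = σ i then a i else 0 := fun i => rfl
  have hblocks : (charmatrix M).submatrix e2 e2 =
      Matrix.fromBlocks
        (Matrix.of fun _ _ : Unit => (X : ℂ[X]) - C (a i₀)) 0 0
        (Matrix.blockDiagonal fun k : K =>
          !![(X : ℂ[X]), -C (a k.1); -C (a (σ k.1)), (X : ℂ[X])]) := by
    ext x y
    rcases x with x | ⟨b, k⟩ <;> rcases y with y | ⟨b', k'⟩
    · -- inl inl
      simp only [Matrix.submatrix_apply, he2, hφinl, Matrix.fromBlocks_apply₁₁, Matrix.of_apply]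
      rw [charmatrix_apply_eq]
      have hMi : M i₀ i₀ = a i₀ := by
        show (if i₀ = σ i₀ then a i₀ else 0) = a i₀
        rw [if_pos hσ0.symm]
      rw [hMi]
    · -- inl inr
      have hj : φ (Sum.inr (b', k')) ≠ i₀ := by
        fin_cases b' <;> simp only [Fin.zero_eta, Fin.mk_one]
        · rw [hφ0]; exact hne k'
        · rw [hφ1]; exact hσne k'
      simp only [Matrix.submatrix_apply, he2, hφinl, Matrix.fromBlocks_apply₁₂, Matrix.zero_apply]
      rw [charmatrix_apply_ne _ _ _ (Ne.symm hj)]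
      have : M i₀ (φ (Sum.inr (b', k'))) = 0 := by
        show (if φ (Sum.inr (b', k')) = σ i₀ then a i₀ else 0) = 0
        rw [hσ0, if_neg hj]
      rw [this, map_zero, neg_zero]
    · -- inr inl
      have hi : φ (Sum.inr (b, k)) ≠ i₀ := by
        fin_cases b <;> simp only [Fin.zero_eta, Fin.mk_one]
        · rw [hφ0]; exact hne k
        · rw [hφ1]; exact hσne k
      simp only [Matrix.submatrix_apply, he2, hφinl, Matrix.fromBlocks_apply₂₁, Matrix.zero_apply]
      rw [charmatrix_apply_ne _ _ _ hi]
      have : M (φ (Sum.inr (b, k))) i₀ = 0 := by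
        show (if i₀ = σ (φ (Sum.inr (b, k))) then a _ else 0) = 0
        rw [if_neg]
        fin_cases b <;> simp only [Fin.zero_eta, Fin.mk_one]
        · rw [hφ0]; exact fun hh => hσne k hh.symm
        · rw [hφ1, hσ]; exact fun hh => hne k hh.symm
      rw [this, map_zero, neg_zero]
    · -- inr inr
      simp only [Matrix.submatrix_apply, he2, Matrix.fromBlocks_apply₂₂,
        Matrix.blockDiagonal_apply]
      by_cases hkk : k = k'
      · subst hkk
        rw [if_pos rfl]
        fin_cases b <;> fin_cases b' <;> simp only [Fin.zero_eta, Fin.mk_one]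
        · rw [hφ0, charmatrix_apply_eq]
          have : M k.1 k.1 = 0 := by
            show (if k.1 = σ k.1 then a k.1 else 0) = 0
            rw [if_neg (hkσ k)]
          rw [this, map_zero, sub_zero]
          simp
        · rw [hφ0, hφ1, charmatrix_apply_ne _ _ _ (hkσ k)]
          have : M k.1 (σ k.1) = a k.1 := by
            show (if σ k.1 = σ k.1 then a k.1 else 0) = a k.1
            rw [if_pos rfl]
          rw [this]; simp
        · rw [hφ1, hφ0, charmatrix_apply_ne _ _ _ (Ne.symm (hkσ k))]
          have : M (σ k.1) k.1 = a (σ k.1) := by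
            show (if k.1 = σ (σ k.1) then a (σ k.1) else 0) = a (σ k.1)
            rw [if_pos (hσ k.1).symm]
          rw [this]; simp
        · rw [hφ1, charmatrix_apply_eq]
          have : M (σ k.1) (σ k.1) = 0 := by
            show (if σ k.1 = σ (σ k.1) then a (σ k.1) else 0) = 0
            rw [if_neg]
            rw [hσ k.1]
            exact Ne.symm (hkσ k)
          rw [this, map_zero, sub_zero]
          simp
      · rw [if_neg hkk]
        have hcc : k.1 ≠ k'.1 := fun hh => hkk (Subtype.ext hh)
        have hij : φ (Sum.inr (b, k)) ≠ φ (Sum.inr (b', k')) := by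
          fin_cases b <;> fin_cases b' <;> simp only [Fin.zero_eta, Fin.mk_one]
          · rw [hφ0, hφ0]; exact hcc
          · rw [hφ0, hφ1]; exact hcross k k'
          · rw [hφ1, hφ0]; exact fun hh => hcross k' k hh.symm
          · rw [hφ1, hφ1]; exact fun hh => hkk (Subtype.ext (hσ.injective hh))
        rw [charmatrix_apply_ne _ _ _ hij]
        have : M (φ (Sum.inr (b, k))) (φ (Sum.inr (b', k'))) = 0 := by
          show (if φ (Sum.inr (b', k')) = σ (φ (Sum.inr (b, k))) then _ else 0) = 0
          rw [if_neg]
          fin_cases b <;> fin_cases b' <;> simp only [Fin.zero_eta, Fin.mk_one]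
          · rw [hφ0, hφ0]; exact fun hh => hcross k' k hh
          · rw [hφ1, hφ0]; exact fun hh => hkk (Subtype.ext (hσ.injective hh)).symm
          · rw [hφ0, hφ1, hσ]; exact fun hh => hcc hh.symm
          · rw [hφ1, hφ1, hσ]; exact fun hh => hcross k k' hh.symm
        rw [this, map_zero, neg_zero]
  rw [hblocks, Matrix.det_fromBlocks_zero₂₁, Matrix.det_blockDiagonal]
  congr 1
  · rw [Matrix.det_unique, Matrix.of_apply]
  · refine Finset.prod_congr rfl fun k _ => ?_
    rw [Matrix.det_fin_two_of, Polynomial.C_mul]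
    ring

/-- If `Γ` is a finite additive abelian group of odd order and `S` is a
multiset of elements of `Γ` with `|S| = 3`, then there is a multiset `L` of nonnegative
reals such that the multiset of eigenvalues of the real Cayley sum adjacency matrix
`A_S(u,v) = m_S(u+v)` equals `{3} + L + (−L)`. -/
theorem cayley_sum_odd_order_spectrum
    {Γ : Type*} [AddCommGroup Γ] [Fintype Γ] [DecidableEq Γ]
    (hodd : Odd (Fintype.card Γ))
    (S : Multiset Γ) (hS : Multiset.card S = 3) :
    ∃ L : Multiset ℝ, (∀ x ∈ L, 0 ≤ x) ∧
      (Matrix.charpoly (Matrix.of fun u v : Γ => (S.count (u + v) : ℝ))).roots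
        = ({3} : Multiset ℝ) + L + L.map (fun x => -x) := by
  classical
  letI : LinearOrder Γ := LinearOrder.lift' (Fintype.equivFin Γ) (Fintype.equivFin Γ).injective
  have hcard : Fintype.card (AddChar Γ ℂ) = Fintype.card Γ := AddChar.card_eq
  let e : AddChar Γ ℂ ≃ Γ := Fintype.equivOfCardEq hcard
  let χ : Γ → AddChar Γ ℂ := fun i => e.symm i
  let a : Γ → ℂ := fun i => (S.map fun s => χ i s).sum
  let σg : Γ → Γ := fun i => e ((χ i)⁻¹)
  have hχσ : ∀ i, χ (σg i) = (χ i)⁻¹ := fun i => e.symm_apply_apply _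
  have hσσ : Function.Involutive σg := by
    intro i
    show e ((χ (σg i))⁻¹) = i
    rw [hχσ, inv_inv]
    exact e.apply_symm_apply i
  have hχ1 : χ (e 1) = 1 := e.symm_apply_apply 1
  have hfix : ∀ i, σg i = i ↔ i = e 1 := by
    intro i
    constructor
    · intro h
      have h1 : (χ i)⁻¹ = χ i := by
        have h2 := congrArg e.symm h
        rwa [e.symm_apply_apply] at h2
      have h2 : χ i ^ 2 = 1 := by
        rw [sq]
        nth_rewrite 1 [← h1]
        exact inv_mul_cancel (χ i)
      have h3 : orderOf (χ i) ∣ 2 := orderOf_dvd_of_pow_eq_one h2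
      have h4 : orderOf (χ i) ∣ Fintype.card Γ := hcard ▸ orderOf_dvd_card
      have hcop : Nat.gcd 2 (Fintype.card Γ) = 1 := Nat.coprime_two_left.mpr hodd
      have h5 : orderOf (χ i) = 1 := Nat.dvd_one.mp (hcop ▸ Nat.dvd_gcd h3 h4)
      have h6 : χ i = 1 := orderOf_eq_one_iff.mp h5
      exact (e.symm_apply_eq).mp h6
    · rintro rfl
      show e ((χ (e 1))⁻¹) = e 1
      rw [hχ1, inv_one]
  -- matrices
  let Ac : Matrix Γ Γ ℂ := Matrix.of fun u v => (S.count (u + v) : ℂ)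
  let U : Matrix Γ Γ ℂ := Matrix.of fun i v => χ i v
  let V : Matrix Γ Γ ℂ := Matrix.of fun v j => χ j (-v)
  let M : Matrix Γ Γ ℂ := Matrix.of fun i j => if j = σg i then a i else 0
  have hsum : ∀ ψ : AddChar Γ ℂ, ∑ u : Γ, ψ u = if ψ = 1 then (Fintype.card Γ : ℂ) else 0 := by
    intro ψ
    rw [AddChar.sum_eq_ite ψ]
    exact if_congr (by rw [AddChar.one_eq_zero]) rfl rfl
  have hUV : U * V = (Fintype.card Γ : ℂ) • 1 := by
    ext i j
    rw [Matrix.mul_apply]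
    have h1 : ∀ v, U i v * V v j = (χ i * (χ j)⁻¹) v := by
      intro v
      show χ i v * χ j (-v) = _
      rw [AddChar.mul_apply, AddChar.inv_apply]
    rw [Finset.sum_congr rfl fun v _ => h1 v, hsum (χ i * (χ j)⁻¹)]
    have hiff : χ i * (χ j)⁻¹ = 1 ↔ i = j := by
      rw [mul_inv_eq_one]
      exact ⟨fun h => e.symm.injective h, fun h => by rw [h]⟩
    rw [Matrix.smul_apply, Matrix.one_apply]
    by_cases h : i = j
    · rw [if_pos (hiff.mpr h), if_pos h, smul_eq_mul, mul_one]
    · rw [if_neg (fun hh => h (hiff.mp hh)), if_neg h, smul_eq_mul, mul_zero]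
  have hUAV : U * Ac * V = (Fintype.card Γ : ℂ) • M := by
    ext i j
    rw [Matrix.mul_apply]
    have h1 : ∀ v, (U * Ac) i v * V v j
        = ∑ u, χ i u * (S.count (u + v) : ℂ) * χ j (-v) := by
      intro v
      rw [Matrix.mul_apply, Finset.sum_mul]
      rfl
    rw [Finset.sum_congr rfl fun v _ => h1 v, Finset.sum_comm]
    have h4 : ∀ u : Γ, χ j u * χ j (-u) = 1 := by
      intro u
      rw [← AddChar.map_add_eq_mul, add_neg_cancel, AddChar.map_zero_eq_one]
    have h2 : ∀ u, ∑ v, χ i u * (S.count (u + v) : ℂ) * χ j (-v)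
        = ∑ w, (χ i * χ j) u * ((S.count w : ℂ) * χ j (-w)) := by
      intro u
      apply Fintype.sum_equiv (Equiv.addLeft u)
      intro v
      show χ i u * (S.count (u + v) : ℂ) * χ j (-v)
          = (χ i * χ j) u * ((S.count (u + v) : ℂ) * χ j (-(u + v)))
      rw [AddChar.mul_apply]
      have h3 : χ j (-(u + v)) = χ j (-u) * χ j (-v) := by
        rw [neg_add, AddChar.map_add_eq_mul]
      rw [h3]
      calc χ i u * (S.count (u + v) : ℂ) * χ j (-v)
          = χ i u * (S.count (u + v) : ℂ) * χ j (-v) * (χ j u * χ j (-u)) := by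
            rw [h4 u, mul_one]
        _ = χ i u * χ j u * ((S.count (u + v) : ℂ) * (χ j (-u) * χ j (-v))) := by ring
    rw [Finset.sum_congr rfl fun u _ => h2 u, ← Finset.sum_mul_sum, hsum (χ i * χ j)]
    have hiff : χ i * χ j = 1 ↔ j = σg i := by
      rw [mul_eq_one_iff_inv_eq]
      constructor
      · intro h
        exact (e.symm_apply_eq).mp h.symm
      · intro h
        rw [h, hχσ i]
    rw [Matrix.smul_apply]
    by_cases hj : j = σg i
    · rw [if_pos (hiff.mpr hj)]
      have hχj : χ j = (χ i)⁻¹ := by rw [hj, hχσ]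
      have h6 : ∀ w, (S.count w : ℂ) * χ j (-w) = (S.count w : ℂ) * χ i w := by
        intro w; rw [hχj, AddChar.inv_apply, neg_neg]
      rw [Finset.sum_congr rfl fun w _ => h6 w, count_mul_sum S (fun w => χ i w)]
      have hMij : M i j = a i := by
        show (if j = σg i then a i else 0) = a i
        rw [if_pos hj]
      rw [hMij, smul_eq_mul]
    · rw [if_neg (fun hh => hj (hiff.mp hh)), zero_mul]
      have hMij : M i j = 0 := by
        show (if j = σg i then a i else 0) = 0
        rw [if_neg hj]
      rw [hMij, smul_eq_mul, mul_zero]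
  -- polynomial level
  have hmapsmul : ∀ (z : ℂ) (B : Matrix Γ Γ ℂ),
      (z • B).map (Polynomial.C : ℂ →+* ℂ[X]) = (Polynomial.C z) • B.map (Polynomial.C : ℂ →+* ℂ[X]) := by
    intro z B; ext i j
    simp [Matrix.map_apply, Matrix.smul_apply, smul_eq_mul]
  have hone : (1 : Matrix Γ Γ ℂ).map (Polynomial.C : ℂ →+* ℂ[X]) = 1 :=
    Matrix.map_one _ (map_zero Polynomial.C) (map_one Polynomial.C)
  have hUV' : U.map Polynomial.C * V.map Polynomial.C
      = Polynomial.C ((Fintype.card Γ : ℂ)) • 1 := by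
    rw [← Matrix.map_mul, hUV, hmapsmul, hone]
  have hUAV' : U.map Polynomial.C * Ac.map Polynomial.C * V.map Polynomial.C
      = Polynomial.C ((Fintype.card Γ : ℂ)) • M.map Polynomial.C := by
    rw [← Matrix.map_mul, ← Matrix.map_mul, hUAV, hmapsmul]
  have hscalar : Matrix.scalar Γ (X : ℂ[X]) = (X : ℂ[X]) • (1 : Matrix Γ Γ ℂ[X]) := by
    ext i j
    rw [Matrix.scalar_apply, Matrix.smul_apply, Matrix.one_apply, Matrix.diagonal_apply]
    split_ifs <;> simp
  have hconj : U.map Polynomial.C * charmatrix Ac * V.map Polynomial.C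
      = Polynomial.C ((Fintype.card Γ : ℂ)) • charmatrix M := by
    rw [charmatrix, charmatrix, RingHom.mapMatrix_apply, RingHom.mapMatrix_apply]
    rw [Matrix.mul_sub, Matrix.sub_mul, hscalar]
    rw [Matrix.mul_smul, Matrix.mul_one, Matrix.smul_mul, hUV', hUAV']
    rw [smul_comm ((X : ℂ[X])) (Polynomial.C ((Fintype.card Γ : ℂ))), ← smul_sub]
  have hcharAc : Ac.charpoly = M.charpoly := by
    have h1 := congrArg Matrix.det hconj
    rw [Matrix.det_mul, Matrix.det_mul, Matrix.det_smul] at h1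
    have h2 : (U.map Polynomial.C).det * (charmatrix Ac).det * (V.map Polynomial.C).det
        = (charmatrix Ac).det * ((U.map Polynomial.C).det * (V.map Polynomial.C).det) := by
      ring
    have h3 : (U.map Polynomial.C).det * (V.map Polynomial.C).det
        = Polynomial.C ((Fintype.card Γ : ℂ)) ^ Fintype.card Γ := by
      rw [← Matrix.det_mul, hUV', Matrix.det_smul, Matrix.det_one, mul_one]
    rw [h2, h3] at h1
    have hCn : (Polynomial.C ((Fintype.card Γ : ℂ))) ^ Fintype.card Γ ≠ 0 := by
      apply pow_ne_zero
      rw [Ne, Polynomial.C_eq_zero, Nat.cast_eq_zero]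
      exact Fintype.card_ne_zero
    apply mul_left_cancel₀ hCn
    rw [Matrix.charpoly, Matrix.charpoly, ← h1]
    ring
  have hM' : M.charpoly = (X - Polynomial.C (a (e 1)))
      * ∏ k : {i : Γ // i < σg i}, ((X : ℂ[X]) ^ 2 - Polynomial.C (a k.1 * a (σg k.1))) :=
    charpoly_involution_matrix σg hσσ (e 1) hfix a
  have ha1 : a (e 1) = 3 := by
    show (S.map fun s => χ (e 1) s).sum = 3
    have : (fun s => χ (e 1) s) = fun _ : Γ => (1 : ℂ) := funext fun s => by
      rw [hχ1, AddChar.one_apply]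
    rw [this, Multiset.map_const', Multiset.sum_replicate, hS]
    norm_num
  -- conjugation facts
  have hnorm1 : ∀ (ψ : AddChar Γ ℂ) (s : Γ), (starRingEnd ℂ) (ψ s) = ψ (-s) := by
    intro ψ s
    have hval : ψ s * ψ (-s) = 1 := by
      rw [← AddChar.map_add_eq_mul, add_neg_cancel, AddChar.map_zero_eq_one]
    have hpow : ψ s ^ Fintype.card Γ = 1 := by
      rw [← AddChar.map_nsmul_eq_pow, card_nsmul_eq_zero, AddChar.map_zero_eq_one]
    have hz : ψ s ≠ 0 := by
      intro h
      rw [h, zero_pow Fintype.card_ne_zero] at hpow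
      exact zero_ne_one hpow
    have hnorm : ‖ψ s‖ = 1 := by
      have h2 : ‖ψ s‖ ^ Fintype.card Γ = 1 := by
        rw [← norm_pow, hpow, norm_one]
      rcases lt_trichotomy ‖ψ s‖ 1 with h | h | h
      · have := pow_lt_one₀ (norm_nonneg _) h (Fintype.card_ne_zero (α := Γ))
        rw [h2] at this
        exact absurd this (lt_irrefl _)
      · exact h
      · have := one_lt_pow₀ h (Fintype.card_ne_zero (α := Γ))
        rw [h2] at this
        exact absurd this (lt_irrefl _)
    have hmc : ψ s * (starRingEnd ℂ) (ψ s) = 1 := by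
      rw [Complex.mul_conj]
      norm_cast
      rw [Complex.normSq_eq_norm_sq, hnorm, one_pow]
    exact mul_left_cancel₀ hz (hmc.trans hval.symm)
  have hprod : ∀ i, a i * a (σg i) = ((Complex.normSq (a i) : ℝ) : ℂ) := by
    intro i
    have h1 : a (σg i) = (starRingEnd ℂ) (a i) := by
      show (S.map fun s => χ (σg i) s).sum = _
      have h2 : a i = (S.map fun s => χ i s).sum := rfl
      rw [h2, ← Multiset.sum_hom _ (starRingEnd ℂ), Multiset.map_map]
      congr 1
      apply Multiset.map_congr rfl
      intro s _
      show χ (σg i) s = (starRingEnd ℂ) (χ i s)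
      rw [hχσ, AddChar.inv_apply, hnorm1]
    rw [h1, Complex.mul_conj]
  -- descent to ℝ
  have hmapA : (Matrix.of fun u v : Γ => (S.count (u + v) : ℝ)).map (algebraMap ℝ ℂ) = Ac := by
    ext u v
    show (algebraMap ℝ ℂ) ((S.count (u + v) : ℝ)) = ((S.count (u + v) : ℂ))
    simp
  let c : {i : Γ // i < σg i} → ℝ := fun k => Complex.normSq (a k.1)
  have hc0 : ∀ k, 0 ≤ c k := fun k => Complex.normSq_nonneg _
  let sq : {i : Γ // i < σg i} → ℝ := fun k => Real.sqrt (c k)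
  let L : Multiset ℝ := (Finset.univ : Finset {i : Γ // i < σg i}).val.map sq
  have hss : ∀ k, sq k ^ 2 = c k := fun k => Real.sq_sqrt (hc0 k)
  let q : ℝ[X] := (X - Polynomial.C 3)
      * ∏ k : {i : Γ // i < σg i}, ((X : ℝ[X]) ^ 2 - Polynomial.C (c k))
  have hcharA : (Matrix.of fun u v : Γ => (S.count (u + v) : ℝ)).charpoly = q := by
    have hinj : Function.Injective (Polynomial.map (algebraMap ℝ ℂ)) :=
      Polynomial.map_injective _ (RingHom.injective _)
    apply hinj
    rw [← Matrix.charpoly_map, hmapA, hcharAc, hM', ha1]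
    rw [Polynomial.map_mul, Polynomial.map_sub, Polynomial.map_X, Polynomial.map_C,
      Polynomial.map_prod]
    have hx3 : (algebraMap ℝ ℂ) 3 = (3 : ℂ) := by norm_num
    rw [hx3]
    congr 1
    refine Finset.prod_congr rfl fun k _ => ?_
    rw [Polynomial.map_sub, Polynomial.map_pow, Polynomial.map_X, Polynomial.map_C]
    rw [show (algebraMap ℝ ℂ) (c k) = ((c k : ℝ) : ℂ) from rfl, ← hprod k.1]
  refine ⟨L, ?_, ?_⟩
  · intro x hx
    obtain ⟨k, -, rfl⟩ := Multiset.mem_map.mp hx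
    exact Real.sqrt_nonneg _
  rw [hcharA]
  have hqform : q = (X - Polynomial.C 3) *
      ((L.map fun r => X - Polynomial.C r).prod *
       ((L.map fun x => -x).map fun r => X - Polynomial.C r).prod) := by
    have hfac : ∀ k : {i : Γ // i < σg i}, (X : ℝ[X]) ^ 2 - Polynomial.C (c k)
        = (X - Polynomial.C (sq k)) * (X - Polynomial.C (-(sq k))) := by
      intro k
      rw [map_neg, sub_neg_eq_add]
      have h7 : ((X : ℝ[X]) - Polynomial.C (sq k)) * (X + Polynomial.C (sq k))
          = X ^ 2 - Polynomial.C (sq k) ^ 2 := by ring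
      rw [h7, ← Polynomial.C_pow, hss]
    show (X - Polynomial.C 3)
        * ∏ k : {i : Γ // i < σg i}, ((X : ℝ[X]) ^ 2 - Polynomial.C (c k)) = _
    rw [Finset.prod_congr rfl fun k _ => hfac k, Finset.prod_mul_distrib,
      Finset.prod_eq_multiset_prod, Finset.prod_eq_multiset_prod]
    have e1 : (L.map fun r => X - Polynomial.C r)
        = Multiset.map (fun k => X - Polynomial.C (sq k)) Finset.univ.val := by
      rw [Multiset.map_map]; rfl
    have e2 : ((L.map fun x => -x).map fun r => X - Polynomial.C r)
        = Multiset.map (fun k => X - Polynomial.C (-sq k)) Finset.univ.val := by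
      rw [Multiset.map_map, Multiset.map_map]; rfl
    rw [e1, e2]
  rw [hqform]
  have hmon1 : ((L.map fun r => X - Polynomial.C r).prod).Monic :=
    Polynomial.monic_multiset_prod_of_monic _ _ fun r _ => Polynomial.monic_X_sub_C r
  have hmon2 : (((L.map fun x => -x).map fun r => X - Polynomial.C r).prod).Monic :=
    Polynomial.monic_multiset_prod_of_monic _ _ fun r _ => Polynomial.monic_X_sub_C r
  rw [Polynomial.roots_mul (mul_ne_zero (Polynomial.monic_X_sub_C (3:ℝ)).ne_zero
      (mul_ne_zero hmon1.ne_zero hmon2.ne_zero)),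
    Polynomial.roots_mul (mul_ne_zero hmon1.ne_zero hmon2.ne_zero),
    Polynomial.roots_X_sub_C, Polynomial.roots_multiset_prod_X_sub_C,
    Polynomial.roots_multiset_prod_X_sub_C, ← add_assoc]
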